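/- Let F be a Fort space with particular point b and 𝔥 : F → F continuous. Then (F, 𝔥) has the specification property if and only if F = {b}. -/

import Mathlib

open Filter

/-- The Fort topology on a set `F` with particular point `b`:
`U` is open iff `b ∉ U` or `F \ U` is finite. -/
def fortTopology {F : Type*} (b : F) : TopologicalSpace F where
  IsOpen U := b ∉ U ∨ (Uᶜ : Set F).Finite
  isOpen_univ := Or.inr (by simp)
  isOpen_inter := by
    rintro U V (hU | hU) hV
    · exact Or.inl fun h => hU h.1
    · rcases hV with hV | hV
      · exact Or.inl fun h => hV h.2
      · exact Or.inr (by rw [Set.compl_inter]; exact hU.union hV)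
  isOpen_sUnion := by
    intro S hS
    by_cases hb : b ∈ ⋃₀ S
    · obtain ⟨U, hU, hbU⟩ := hb
      rcases hS U hU with h | h
      · exact absurd hbU h
      · exact Or.inr (h.subset (Set.compl_subset_compl.mpr (Set.subset_sUnion_of_mem hU)))
    · exact Or.inl hb

/-- The basic entourage `γ_H = ((F \ H) × (F \ H)) ∪ Δ_H` for `H ⊆ F`. -/
def fortEnt {F : Type*} (H : Set F) : Set (F × F) :=
  (Hᶜ ×ˢ Hᶜ) ∪ {p : F × F | p.1 = p.2 ∧ p.1 ∈ H}

/-- Membership in the unique compatible uniform structure `𝒦` on the Fort space `F`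
with particular point `b`: `D` contains some `γ_H` with `H ⊆ F \ {b}` finite. -/
def IsFortEntourage {F : Type*} (b : F) (D : Set (F × F)) : Prop :=
  ∃ H : Set F, H.Finite ∧ b ∉ H ∧ fortEnt H ⊆ D

/-- Almost weak specification property for a self-map `𝔥` of the Fort space `F`
with particular point `b`. -/
def FortAlmostWeakSpec {F : Type*} (b : F) (h : F → F) : Prop :=
  ∀ D : Set (F × F), IsFortEntourage b D →
    ∃ N : ℕ → ℕ, Tendsto (fun n : ℕ => (N n : ℝ) / (n : ℝ)) atTop (nhds 0) ∧
      ∀ n : ℕ, 2 ≤ n → ∀ y : ℕ → F, ∀ l k : ℕ → ℕ,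
        (∀ j, j < n → l j ≤ k j) →
        (∀ j, j + 1 < n → k j < l (j + 1) ∧ N (k (j + 1) - l (j + 1)) ≤ l (j + 1) - k j) →
        ∃ x : F, ∀ j, j < n → ∀ i, l j ≤ i → i ≤ k j → (h^[i] x, h^[i] (y j)) ∈ D

/-- Weak specification property for a self-map `𝔥` of the Fort space `F`. -/
def FortWeakSpec {F : Type*} (b : F) (h : F → F) : Prop :=
  ∀ D : Set (F × F), IsFortEntourage b D →
    ∃ N : ℕ,
      ∀ n : ℕ, 2 ≤ n → ∀ y : ℕ → F, ∀ l k : ℕ → ℕ,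
        (∀ j, j < n → l j ≤ k j) →
        (∀ j, j + 1 < n → k j < l (j + 1) ∧ N ≤ l (j + 1) - k j) →
        ∃ x : F, ∀ j, j < n → ∀ i, l j ≤ i → i ≤ k j → (h^[i] x, h^[i] (y j)) ∈ D

/-- Specification property for a self-map `𝔥` of the Fort space `F`: weak
specification with a periodic tracing point. -/
def FortSpec {F : Type*} (b : F) (h : F → F) : Prop :=
  ∀ D : Set (F × F), IsFortEntourage b D →
    ∃ N : ℕ,
      ∀ n : ℕ, 2 ≤ n → ∀ y : ℕ → F, ∀ l k : ℕ → ℕ,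
        (∀ j, j < n → l j ≤ k j) →
        (∀ j, j + 1 < n → k j < l (j + 1) ∧ N ≤ l (j + 1) - k j) →
        ∃ x : F, (∃ m : ℕ, 1 ≤ m ∧ h^[m] x = x) ∧
          ∀ j, j < n → ∀ i, l j ≤ i → i ≤ k j → (h^[i] x, h^[i] (y j)) ∈ D

/-- `(F, 𝔥)` has the specification property iff `F = {b}`. -/
lemma mem_fortEnt_singleton {F : Type*} {a u v : F} :
    (u, v) ∈ fortEnt {a} ↔ (u ≠ a ∧ v ≠ a) ∨ (u = v ∧ u = a) := by
  simp [fortEnt, Set.mem_prod]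

theorem stmt_17 {F : Type*} (b : F) (𝔥 : F → F)
    (hcont : @Continuous F F (fortTopology b) (fortTopology b) 𝔥) :
    FortSpec b 𝔥 ↔ ∀ x : F, x = b := by
  constructor
  · intro hspec a
    by_contra hab
    have hba : b ≠ a := fun h => hab h.symm
    obtain ⟨N, hN⟩ := hspec (fortEnt {a})
      ⟨{a}, Set.finite_singleton a, by simpa using hba, subset_rfl⟩
    set M := N + 1 with hM
    -- Step A: a is periodic
    obtain ⟨x0, ⟨m, hm1, hmx⟩, htr0⟩ := hN 2 le_rfl (fun _ => a)
      (fun j => if j = 0 then 0 else M) (fun j => if j = 0 then 0 else M)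
      (fun j _ => le_rfl)
      (fun j hj => by
        have : j = 0 := by omega
        subst this; simp [hM])
    have hx0 : x0 = a := by
      have h := htr0 0 (by norm_num) 0 (by simp) (by simp)
      simp only [Function.iterate_zero, id_eq] at h
      rcases mem_fortEnt_singleton.mp h with ⟨_, h2⟩ | ⟨_, h2⟩
      · exact absurd rfl h2
      · exact h2
    rw [hx0] at hmx
    have hm0 : 0 < m := hm1
    -- Step B: for L ≥ M, 𝔥^[L] a = a
    have hfix : ∀ L, M ≤ L → 𝔥^[L] a = a := by
      intro L hL
      obtain ⟨x1, _, htr1⟩ := hN 2 le_rfl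
        (fun j => if j = 0 then a else 𝔥^[m - L % m] a)
        (fun j => if j = 0 then 0 else L) (fun j => if j = 0 then 0 else L)
        (fun j _ => le_rfl)
        (fun j hj => by
          have : j = 0 := by omega
          subst this; simp; omega)
      have hx1 : x1 = a := by
        have h := htr1 0 (by norm_num) 0 (by simp) (by simp)
        simp only [if_pos rfl, Function.iterate_zero, id_eq] at h
        rcases mem_fortEnt_singleton.mp h with ⟨_, h2⟩ | ⟨_, h2⟩
        · exact absurd rfl h2
        · exact h2
      have h := htr1 1 (by norm_num) L (by simp) (by simp)
      norm_num at h
      have key : 𝔥^[L] (𝔥^[m - L % m] a) = a := by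
        rw [← Function.iterate_add_apply]
        have hdvd : L + (m - L % m) = m * (L / m + 1) := by
          have h1 := Nat.div_add_mod L m
          have h2 := Nat.mod_lt L hm0
          rw [Nat.mul_succ]
          omega
        rw [hdvd, Function.iterate_mul]
        exact Function.iterate_fixed hmx _
      rw [key, hx1] at h
      rcases mem_fortEnt_singleton.mp h with ⟨_, h2⟩ | ⟨h2, _⟩
      · exact absurd rfl h2
      · exact h2
    have hfa : 𝔥 a = a := by
      have h1 := hfix M le_rfl
      have h2 := hfix (M + 1) (by omega)
      calc 𝔥 a = 𝔥 (𝔥^[M] a) := by rw [h1]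
        _ = 𝔥^[M + 1] a := (Function.iterate_succ_apply' 𝔥 M a).symm
        _ = a := h2
    have hfaL : ∀ L, 𝔥^[L] a = a := fun L => Function.iterate_fixed hfa L
    -- Step C: contradiction
    obtain ⟨x2, ⟨p, hp1, hpx⟩, htr2⟩ := hN 2 le_rfl (fun j => if j = 0 then b else a)
      (fun j => if j = 0 then 0 else M) (fun j => if j = 0 then 0 else M)
      (fun j _ => le_rfl)
      (fun j hj => by
        have : j = 0 := by omega
        subst this; simp [hM])
    have hx2ne : x2 ≠ a := by
      have h := htr2 0 (by norm_num) 0 (by simp) (by simp)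
      norm_num at h
      rcases mem_fortEnt_singleton.mp h with ⟨h2, _⟩ | ⟨h2, h3⟩
      · exact h2
      · exact absurd (h2.symm.trans h3) hba
    have hMx2 : 𝔥^[M] x2 = a := by
      have h := htr2 1 (by norm_num) M (by simp) (by simp)
      norm_num at h
      rw [hM, Function.iterate_succ_apply, Function.iterate_succ_apply, hfa, hfaL] at h
      rcases mem_fortEnt_singleton.mp h with ⟨_, h2⟩ | ⟨h2, _⟩
      · exact absurd rfl h2
      · rw [hM, Function.iterate_succ_apply]
        exact h2
    have : x2 = a := by
      have h1 : 𝔥^[p * M] x2 = x2 := by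
        rw [Function.iterate_mul]
        exact Function.iterate_fixed hpx M
      have h2 : p * M = (p * M - M) + M := by
        have hle : M ≤ p * M := Nat.le_mul_of_pos_left M hp1
        omega
      calc x2 = 𝔥^[p * M] x2 := h1.symm
        _ = 𝔥^[(p * M - M) + M] x2 := by rw [← h2]
        _ = 𝔥^[p * M - M] (𝔥^[M] x2) := Function.iterate_add_apply 𝔥 _ _ _
        _ = 𝔥^[p * M - M] a := by rw [hMx2]
        _ = a := hfaL _
    exact hx2ne this
  · rintro hall D ⟨H, hHfin, hbH, hHD⟩
    refine ⟨0, fun n hn y l k hlk hgap => ?_⟩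
    refine ⟨b, ⟨1, le_rfl, by simpa using hall (𝔥 b)⟩, ?_⟩
    intro j hj i hli hik
    have h1 : 𝔥^[i] b = b := hall _
    have h2 : 𝔥^[i] (y j) = b := hall _
    rw [h1, h2]
    exact hHD (Or.inl ⟨hbH, hbH⟩)
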